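/- Let β > 0. For every solution of the delayed Cucker–Smale system, all indices i, j and all t ≥ 2τ, one has |v_j(t−τ) − v_i(t−σ)| ≤ d_v(t−τ) + ∫_{t−τ}^{t−σ} d_v(s−τ) ds + β^{−1} e^{2τ} G(t−σ). -/

import Mathlib

open scoped BigOperators
open MeasureTheory Set

lemma csAux_contOn_sup' {ι : Type*} (s : Finset ι) (hs : s.Nonempty) {U : Set ℝ}
    (f : ι → ℝ → ℝ) (hf : ∀ i ∈ s, ContinuousOn (f i) U) :
    ContinuousOn (fun t => s.sup' hs (fun i => f i t)) U := by
  revert hf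
  induction hs using Finset.Nonempty.cons_induction with
  | singleton a => intro hf; simpa using hf a (by simp)
  | cons a s ha hs ih =>
      intro hf
      simp only [Finset.sup'_cons hs]
      exact (hf a (by simp)).sup (ih (fun i hi => hf i (Finset.mem_cons_of_mem hi)))

lemma csAux_intervalIntegrable_of_Icc {f : ℝ → ℝ} {a b : ℝ} (hab : a ≤ b)
    (hf : IntegrableOn f (Icc a b)) : IntervalIntegrable f volume a b := by
  refine IntegrableOn.intervalIntegrable ?_
  rwa [uIcc_of_le hab]

lemma csAux_integral_subinterval_le {f : ℝ → ℝ} {a b a' b' : ℝ}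
    (h1 : a' ≤ a) (h2 : a ≤ b) (h3 : b ≤ b')
    (hf : IntegrableOn f (Icc a' b'))
    (hpos : ∀ x ∈ Icc a' b', 0 ≤ f x) :
    ∫ x in a..b, f x ≤ ∫ x in a'..b', f x := by
  have i1 : IntervalIntegrable f volume a' a :=
    csAux_intervalIntegrable_of_Icc h1 (hf.mono_set (Icc_subset_Icc le_rfl (h2.trans h3)))
  have i2 : IntervalIntegrable f volume a b :=
    csAux_intervalIntegrable_of_Icc h2 (hf.mono_set (Icc_subset_Icc h1 h3))
  have i3 : IntervalIntegrable f volume b b' :=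
    csAux_intervalIntegrable_of_Icc h3 (hf.mono_set (Icc_subset_Icc (h1.trans h2) le_rfl))
  have e1 : ∫ x in a'..b, f x = (∫ x in a'..a, f x) + ∫ x in a..b, f x :=
    (intervalIntegral.integral_add_adjacent_intervals i1 i2).symm
  have e2 : ∫ x in a'..b', f x = (∫ x in a'..b, f x) + ∫ x in b..b', f x :=
    (intervalIntegral.integral_add_adjacent_intervals (i1.trans i2) i3).symm
  have n1 : 0 ≤ ∫ x in a'..a, f x :=
    intervalIntegral.integral_nonneg h1 (fun u hu => hpos u ⟨hu.1, hu.2.trans (h2.trans h3)⟩)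
  have n3 : 0 ≤ ∫ x in b..b', f x :=
    intervalIntegral.integral_nonneg h3 (fun u hu => hpos u ⟨(h1.trans h2).trans hu.1, hu.2⟩)
  linarith

/-- Diameter of a configuration `w` at time `t` (used for positions and velocities). -/
noncomputable def csDiam {N d : ℕ} (w : Fin N → ℝ → EuclideanSpace ℝ (Fin d)) (t : ℝ) : ℝ :=
  ⨆ i : Fin N, ⨆ j : Fin N, ‖w i t - w j t‖

/-- Maximum of the norms of `w' i t` over the agents `i`. -/
noncomputable def csMaxDer {N d : ℕ} (w' : Fin N → ℝ → EuclideanSpace ℝ (Fin d)) (t : ℝ) : ℝ :=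
  ⨆ i : Fin N, ‖w' i t‖

/-- Lyapunov–Krasovskii functional
`G(t) = d_v(t) + β ∫_{max(0,t-2τ)}^t e^{-(t-s)} ∫_s^t max_i |v̇_i(r)| dr ds`. -/
noncomputable def csG {N d : ℕ} (β τ : ℝ)
    (v v' : Fin N → ℝ → EuclideanSpace ℝ (Fin d)) (t : ℝ) : ℝ :=
  csDiam v t +
    β * ∫ s in (max 0 (t - 2 * τ))..t, Real.exp (-(t - s)) * ∫ r in s..t, csMaxDer v' r

/-- Minimal communication rate `a̲(t) = min_{i ≠ j} ψ(|x_i(t-σ) - x_j(t-τ)|)/(N-1)`. -/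
noncomputable def csAMin {N d : ℕ} (ψ : ℝ → ℝ) (σ τ : ℝ)
    (x : Fin N → ℝ → EuclideanSpace ℝ (Fin d)) (t : ℝ) : ℝ :=
  ⨅ p : {p : Fin N × Fin N // p.1 ≠ p.2},
    ψ ‖x p.val.1 (t - σ) - x p.val.2 (t - τ)‖ / (N - 1)

theorem stmt_14
    (N d : ℕ) (hN : 2 ≤ N) (hd : 1 ≤ d)
    (σ τ : ℝ) (hσ : 0 ≤ σ) (hστ : σ ≤ τ) (hτ : 0 < τ)
    (β : ℝ) (hβ : 0 < β)
    (ψ : ℝ → ℝ)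
    (hψpos : ∀ s, 0 ≤ s → 0 < ψ s)
    (hψcont : ContinuousOn ψ (Set.Ici 0))
    (hψmono : ∀ s t, 0 ≤ s → s ≤ t → ψ t ≤ ψ s)
    (hψbdd : ∀ s, 0 ≤ s → ψ s ≤ 1)
    (x v v' : Fin N → ℝ → EuclideanSpace ℝ (Fin d))
    (hxc : ∀ i, ContinuousOn (x i) (Set.Ici (-τ)))
    (hvc : ∀ i, ContinuousOn (v i) (Set.Ici (-τ)))
    (hxder : ∀ i, ∀ t, -τ < t → HasDerivAt (x i) (v i t) t)
    (hvder : ∀ i, ∀ t > (0:ℝ), HasDerivAt (v i) (v' i t) t)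
    (hode : ∀ i, ∀ t > (0:ℝ),
      v' i t = ∑ j ∈ Finset.univ.erase i,
        (ψ ‖x i (t - σ) - x j (t - τ)‖ / (N - 1)) • (v j (t - τ) - v i (t - σ))) :
    ∀ (i j : Fin N), ∀ t, 2 * τ ≤ t →
      ‖v j (t - τ) - v i (t - σ)‖ ≤ csDiam v (t - τ)
        + (∫ s in (t - τ)..(t - σ), csDiam v (s - τ))
        + β⁻¹ * Real.exp (2 * τ) * csG β τ v v' (t - σ) := by
  intro i j t ht
  have hNe : Nonempty (Fin N) := ⟨⟨0, by omega⟩⟩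
  -- the right-hand side of the ODE, as a function
  set w : Fin N → ℝ → EuclideanSpace ℝ (Fin d) := fun k s =>
    ∑ l ∈ Finset.univ.erase k,
      (ψ ‖x k (s - σ) - x l (s - τ)‖ / (N - 1)) • (v l (s - τ) - v k (s - σ)) with hw
  set Mt : ℝ → ℝ := fun r => ⨆ k, ‖w k r‖ with hMt
  set a : ℝ := t - τ with ha
  set b : ℝ := t - σ with hb
  have hab : a ≤ b := by simp [ha, hb]; linarith
  have ha0 : (0:ℝ) < a := by simp [ha]; linarith
  have hb0 : (0:ℝ) < b := lt_of_lt_of_le ha0 hab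
  have ht2 : (0:ℝ) ≤ t - 2*τ := by linarith
  -- basic facts about w
  have hwder : ∀ k, ∀ r > (0:ℝ), HasDerivAt (v k) (w k r) r := by
    intro k r hr
    have := hvder k r hr
    rwa [hode k r hr] at this
  have hshift : ∀ (g : ℝ → EuclideanSpace ℝ (Fin d)), ContinuousOn g (Ici (-τ)) →
      ∀ c : ℝ, 0 ≤ c → c ≤ τ → ContinuousOn (fun s => g (s - c)) (Ici 0) := by
    intro g hg c hc hcτ
    apply hg.comp ((continuous_id.sub continuous_const).continuousOn)
    intro s hs
    simp only [mem_Ici, id_eq, Pi.sub_apply] at *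
    linarith
  have hwcont : ∀ k, ContinuousOn (w k) (Ici 0) := by
    intro k
    rw [hw]
    apply continuousOn_finset_sum
    intro l _
    have hc1 : ContinuousOn (fun s => x k (s - σ)) (Ici 0) := hshift (x k) (hxc k) σ hσ hστ
    have hc2 : ContinuousOn (fun s => x l (s - τ)) (Ici 0) := hshift (x l) (hxc l) τ hτ.le le_rfl
    have hnorm : ContinuousOn (fun s => ‖x k (s - σ) - x l (s - τ)‖) (Ici 0) := (hc1.sub hc2).norm
    have hpsi : ContinuousOn (fun s => ψ ‖x k (s - σ) - x l (s - τ)‖ / (N - 1)) (Ici 0) := by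
      apply ContinuousOn.div_const
      exact hψcont.comp hnorm (fun s _ => norm_nonneg _)
    exact hpsi.smul ((hshift (v l) (hvc l) τ hτ.le le_rfl).sub (hshift (v k) (hvc k) σ hσ hστ))
  have hMt_nonneg : ∀ r, 0 ≤ Mt r := by
    intro r
    exact Real.iSup_nonneg (fun k => norm_nonneg _)
  have hMt_ge : ∀ k r, ‖w k r‖ ≤ Mt r := by
    intro k r
    exact le_ciSup (f := fun k => ‖w k r‖) (Set.Finite.bddAbove (Set.finite_range _)) k
  have hMtcont : ContinuousOn Mt (Ici 0) := by
    have hrw : Mt = fun r => Finset.univ.sup' Finset.univ_nonempty (fun k => ‖w k r‖) := by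
      funext r
      rw [Finset.sup'_univ_eq_ciSup]
    rw [hrw]
    exact csAux_contOn_sup' _ _ _ (fun k _ => (hwcont k).norm)
  have hM_eq : ∀ r, 0 < r → csMaxDer v' r = Mt r := by
    intro r hr
    unfold csMaxDer
    simp only [hMt]
    exact iSup_congr (fun k => by rw [hode k r hr])
  -- facts about csDiam
  have hdiam_ge : ∀ (c e : Fin N) (u : ℝ), ‖v c u - v e u‖ ≤ csDiam v u := by
    intro c e u
    have h1 : ‖v c u - v e u‖ ≤ ⨆ e', ‖v c u - v e' u‖ :=
      le_ciSup (Set.Finite.bddAbove (Set.finite_range fun e' => ‖v c u - v e' u‖)) e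
    have h2 : (⨆ e', ‖v c u - v e' u‖) ≤ ⨆ c', ⨆ e', ‖v c' u - v e' u‖ :=
      le_ciSup (Set.Finite.bddAbove (Set.finite_range fun c' => ⨆ e', ‖v c' u - v e' u‖)) c
    exact h1.trans h2
  have hdiam_nonneg : ∀ u, 0 ≤ csDiam v u := by
    intro u
    simpa using hdiam_ge ⟨0, by omega⟩ ⟨0, by omega⟩ u
  have hdiamcont : ContinuousOn (fun u => csDiam v u) (Ici (-τ)) := by
    have hrw : ∀ u, csDiam v u = Finset.univ.sup' Finset.univ_nonempty
        (fun p : Fin N × Fin N => ‖v p.1 u - v p.2 u‖) := by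
      intro u
      refine le_antisymm ?_ ?_
      · refine ciSup_le (fun c => ciSup_le (fun e => ?_))
        exact Finset.le_sup' (fun p : Fin N × Fin N => ‖v p.1 u - v p.2 u‖)
          (Finset.mem_univ (c, e))
      · exact Finset.sup'_le _ _ (fun p _ => hdiam_ge p.1 p.2 u)
    simp only [hrw]
    exact csAux_contOn_sup' _ _ _ (fun p _ => ((hvc p.1).sub (hvc p.2)).norm)
  -- interval integrability of w on subintervals of [0, ∞)
  have hwint : ∀ k, ∀ c e : ℝ, 0 ≤ c → c ≤ e → IntervalIntegrable (w k) volume c e := by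
    intro k c e hc hce
    apply ContinuousOn.intervalIntegrable
    apply (hwcont k).mono
    rw [uIcc_of_le hce]
    exact fun z hz => le_trans hc hz.1
  -- FTC on [c, e] ⊆ [0, ∞)
  have hftc : ∀ k, ∀ c e : ℝ, 0 ≤ c → c ≤ e →
      ∫ s in c..e, w k s = v k e - v k c := by
    intro k c e hc hce
    apply intervalIntegral.integral_eq_sub_of_hasDeriv_right_of_le hce
    · exact (hvc k).mono (fun z hz => by
        simp only [mem_Ici]
        have := hz.1
        linarith)
    · intro r hr
      exact (hwder k r (lt_of_le_of_lt hc hr.1)).hasDerivWithinAt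
    · exact hwint k c e hc hce
  -- Step B: pointwise bound on ‖w i s‖ for s ∈ [a, b]
  have hN1 : (0:ℝ) < (N:ℝ) - 1 := by
    have : (2:ℝ) ≤ (N:ℝ) := by exact_mod_cast hN
    linarith
  have hB : ∀ s ∈ Icc a b, ‖w i s‖ ≤ csDiam v (s - τ) + ∫ r in (s - τ)..b, Mt r := by
    intro s hs
    have hu1 : (0:ℝ) ≤ s - τ := by
      have := hs.1; simp only [ha] at this ⊢; linarith
    have h12 : s - τ ≤ s - σ := by linarith
    have hu2b : s - σ ≤ b := by
      have := hs.2; simp only [hb] at this ⊢; linarith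
    have hu1b : s - τ ≤ b := h12.trans hu2b
    have hMtIcc : IntegrableOn Mt (Icc (s - τ) b) volume :=
      (hMtcont.mono (fun z hz => hu1.trans hz.1)).integrableOn_Icc
    have hX : ‖v i (s - σ) - v i (s - τ)‖ ≤ ∫ r in (s - τ)..b, Mt r := by
      rw [← hftc i (s - τ) (s - σ) hu1 h12]
      calc ‖∫ r in (s - τ)..(s - σ), w i r‖ ≤ ∫ r in (s - τ)..(s - σ), ‖w i r‖ :=
            intervalIntegral.norm_integral_le_integral_norm h12
        _ ≤ ∫ r in (s - τ)..(s - σ), Mt r := by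
            refine intervalIntegral.integral_mono_on h12 (hwint i _ _ hu1 h12).norm
              (csAux_intervalIntegrable_of_Icc h12
                (hMtIcc.mono_set (Icc_subset_Icc le_rfl hu2b))) ?_
            exact fun r _ => hMt_ge i r
        _ ≤ ∫ r in (s - τ)..b, Mt r :=
            csAux_integral_subinterval_le le_rfl h12 hu2b hMtIcc (fun z _ => hMt_nonneg z)
    set B : ℝ := csDiam v (s - τ) + ∫ r in (s - τ)..b, Mt r with hBdef
    have hBnn : 0 ≤ B := add_nonneg (hdiam_nonneg _)
      (intervalIntegral.integral_nonneg hu1b (fun r _ => hMt_nonneg r))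
    have hterm : ∀ l : Fin N, ‖v l (s - τ) - v i (s - σ)‖ ≤ B := by
      intro l
      calc ‖v l (s - τ) - v i (s - σ)‖
          ≤ ‖v l (s - τ) - v i (s - τ)‖ + ‖v i (s - τ) - v i (s - σ)‖ := by
            have : v l (s - τ) - v i (s - σ) =
                (v l (s - τ) - v i (s - τ)) + (v i (s - τ) - v i (s - σ)) := by abel
            rw [this]; exact norm_add_le _ _
        _ ≤ csDiam v (s - τ) + ∫ r in (s - τ)..b, Mt r := by
            refine add_le_add (hdiam_ge l i (s - τ)) ?_
            rw [norm_sub_rev]; exact hX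
    have hcnn : ∀ l : Fin N, 0 ≤ ψ ‖x i (s - σ) - x l (s - τ)‖ / ((N:ℝ) - 1) :=
      fun l => div_nonneg (hψpos _ (norm_nonneg _)).le hN1.le
    calc ‖w i s‖ ≤ ∑ l ∈ Finset.univ.erase i,
          ‖(ψ ‖x i (s - σ) - x l (s - τ)‖ / ((N:ℝ) - 1)) • (v l (s - τ) - v i (s - σ))‖ :=
          norm_sum_le _ _
      _ ≤ ∑ l ∈ Finset.univ.erase i,
          (ψ ‖x i (s - σ) - x l (s - τ)‖ / ((N:ℝ) - 1)) * B := by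
          refine Finset.sum_le_sum (fun l _ => ?_)
          rw [norm_smul, Real.norm_eq_abs, abs_of_nonneg (hcnn l)]
          exact mul_le_mul_of_nonneg_left (hterm l) (hcnn l)
      _ ≤ ∑ l ∈ Finset.univ.erase i, (1 / ((N:ℝ) - 1)) * B := by
          refine Finset.sum_le_sum (fun l _ => ?_)
          refine mul_le_mul_of_nonneg_right ?_ hBnn
          exact (div_le_div_iff_of_pos_right hN1).2 (hψbdd _ (norm_nonneg _))
      _ = ((N:ℝ) - 1) * ((1 / ((N:ℝ) - 1)) * B) := by
          rw [Finset.sum_const, Finset.card_erase_of_mem (Finset.mem_univ i), Finset.card_univ,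
            Fintype.card_fin, nsmul_eq_mul]
          congr 1
          have : (1:ℕ) ≤ N := by omega
          push_cast [this]
          ring
      _ = B := by field_simp
  -- Step A
  have hA : ‖v j a - v i b‖ ≤ csDiam v a + ∫ s in a..b, ‖w i s‖ := by
    have key : ∫ s in a..b, w i s = v i b - v i a := hftc i a b ha0.le hab
    calc ‖v j a - v i b‖ = ‖(v j a - v i a) + (v i a - v i b)‖ := by congr 1; abel
      _ ≤ ‖v j a - v i a‖ + ‖v i a - v i b‖ := norm_add_le _ _
      _ ≤ csDiam v a + ∫ s in a..b, ‖w i s‖ := by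
          refine add_le_add (hdiam_ge j i a) ?_
          rw [norm_sub_rev, ← key]
          exact intervalIntegral.norm_integral_le_integral_norm hab
  -- integrability of the comparison functions
  have hHcont : ContinuousOn (fun u => ∫ r in u..b, Mt r) (Icc 0 b) := by
    have : IntegrableOn Mt (uIcc 0 b) volume := by
      rw [uIcc_of_le hb0.le]
      exact (hMtcont.mono (Icc_subset_Ici_self)).integrableOn_Icc
    simpa [uIcc_of_le hb0.le] using intervalIntegral.continuousOn_primitive_interval_left this
  -- Step C
  have hsubmap : ∀ s ∈ uIcc a b, s - τ ∈ Icc (0:ℝ) b := by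
    intro s hs
    rw [uIcc_of_le hab] at hs
    constructor
    · have := hs.1; simp only [ha] at this; linarith
    · have := hs.2; simp only [hb] at this ⊢; linarith
  have hint_D : IntervalIntegrable (fun s => csDiam v (s - τ)) volume a b := by
    apply ContinuousOn.intervalIntegrable
    apply hdiamcont.comp ((continuous_id.sub continuous_const).continuousOn)
    intro s hs
    have := (hsubmap s hs).1
    simp only [mem_Ici, id_eq, Pi.sub_apply]
    linarith
  have hint_H : IntervalIntegrable (fun s => ∫ r in (s - τ)..b, Mt r) volume a b := by
    apply ContinuousOn.intervalIntegrable
    exact hHcont.comp ((continuous_id.sub continuous_const).continuousOn) hsubmap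
  have hC : ∫ s in a..b, ‖w i s‖ ≤ (∫ s in a..b, csDiam v (s - τ))
      + ∫ s in a..b, (∫ r in (s - τ)..b, Mt r) := by
    calc ∫ s in a..b, ‖w i s‖
        ≤ ∫ s in a..b, (csDiam v (s - τ) + ∫ r in (s - τ)..b, Mt r) :=
          intervalIntegral.integral_mono_on hab (hwint i a b ha0.le hab).norm
            (hint_D.add hint_H) hB
      _ = _ := intervalIntegral.integral_add hint_D hint_H
  -- Step D: change of variables and comparison with csG
  have hD : ∫ s in a..b, (∫ r in (s - τ)..b, Mt r)
      ≤ β⁻¹ * Real.exp (2*τ) * csG β τ v v' b := by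
    set H : ℝ → ℝ := fun u => ∫ r in u..b, Mt r with hHdef
    set K : ℝ → ℝ := fun u => Real.exp (-(b - u)) * H u with hKdef
    have haτ : (0:ℝ) ≤ a - τ := by simp only [ha]; linarith
    have hab2 : a - τ ≤ b - τ := by linarith
    have hbτb : b - τ ≤ b := by linarith
    have hHnn : ∀ u, u ≤ b → 0 ≤ H u :=
      fun u hu => intervalIntegral.integral_nonneg hu (fun r _ => hMt_nonneg r)
    have hKcont : ContinuousOn K (Icc 0 b) := by
      apply ContinuousOn.mul ?_ hHcont
      exact (Real.continuous_exp.comp (continuous_const.sub continuous_id).neg).continuousOn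
    have hKnn : ∀ u ∈ Icc (max 0 (b - 2*τ)) b, 0 ≤ K u := by
      intro u hu
      exact mul_nonneg (Real.exp_nonneg _) (hHnn u hu.2)
    have hmax0 : max 0 (b - 2*τ) ≤ a - τ := by
      apply max_le haτ
      simp only [ha, hb]; linarith
    have hmaxnn : (0:ℝ) ≤ max 0 (b - 2*τ) := le_max_left _ _
    -- change of variables
    have e_sub : ∫ s in a..b, (∫ r in (s - τ)..b, Mt r) = ∫ u in (a - τ)..(b - τ), H u :=
      intervalIntegral.integral_comp_sub_right H τ
    -- step 1
    have intH : IntervalIntegrable H volume (a - τ) (b - τ) := by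
      apply ContinuousOn.intervalIntegrable
      apply hHcont.mono
      rw [uIcc_of_le hab2]
      exact Icc_subset_Icc haτ hbτb
    have intK : IntervalIntegrable K volume (a - τ) (b - τ) := by
      apply ContinuousOn.intervalIntegrable
      apply hKcont.mono
      rw [uIcc_of_le hab2]
      exact Icc_subset_Icc haτ hbτb
    have step1 : ∫ u in (a - τ)..(b - τ), H u
        ≤ Real.exp (2*τ) * ∫ u in (a - τ)..(b - τ), K u := by
      rw [← intervalIntegral.integral_const_mul]
      refine intervalIntegral.integral_mono_on hab2 intH (intK.const_mul _) ?_
      intro u hu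
      have h1 : 0 ≤ H u := hHnn u (hu.2.trans hbτb)
      have h2 : (1:ℝ) ≤ Real.exp (2*τ) * Real.exp (-(b - u)) := by
        rw [← Real.exp_add]
        have hub : b - u ≤ 2*τ := by
          have := hu.1
          simp only [ha, hb] at this ⊢
          linarith
        have : (0:ℝ) ≤ 2*τ + -(b - u) := by linarith
        simpa using Real.one_le_exp this
      calc H u = 1 * H u := (one_mul _).symm
        _ ≤ (Real.exp (2*τ) * Real.exp (-(b - u))) * H u := mul_le_mul_of_nonneg_right h2 h1
        _ = Real.exp (2*τ) * K u := by rw [hKdef]; ring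
    -- step 2
    have step2 : ∫ u in (a - τ)..(b - τ), K u ≤ ∫ u in (max 0 (b - 2*τ))..b, K u := by
      refine csAux_integral_subinterval_le hmax0 hab2 hbτb ?_ hKnn
      exact (hKcont.mono (Icc_subset_Icc hmaxnn le_rfl)).integrableOn_Icc
    -- step 3: replace Mt by csMaxDer
    have step3 : ∫ u in (max 0 (b - 2*τ))..b, K u
        = ∫ u in (max 0 (b - 2*τ))..b, Real.exp (-(b - u)) * ∫ r in u..b, csMaxDer v' r := by
      apply intervalIntegral.integral_congr
      intro u hu
      rw [uIcc_of_le (le_trans hmax0 (hab2.trans hbτb))] at hu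
      have hu0 : (0:ℝ) ≤ u := hmaxnn.trans hu.1
      have hinner : ∫ r in u..b, Mt r = ∫ r in u..b, csMaxDer v' r := by
        apply intervalIntegral.integral_congr_ae
        refine Filter.Eventually.of_forall (fun r hr => ?_)
        rw [uIoc_of_le hu.2] at hr
        exact (hM_eq r (lt_of_le_of_lt hu0 hr.1)).symm
      simp only [hKdef, hHdef, hinner]
    -- step 4 : identify with csG
    set I : ℝ := ∫ u in (max 0 (b - 2*τ))..b, Real.exp (-(b - u)) * ∫ r in u..b, csMaxDer v' r
      with hIdef
    have hGdef : csG β τ v v' b = csDiam v b + β * I := rfl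
    have hβI : β * I ≤ csG β τ v v' b := by
      rw [hGdef]
      linarith [hdiam_nonneg b]
    have hIle : I ≤ β⁻¹ * csG β τ v v' b := by
      have h5 : β⁻¹ * (β * I) ≤ β⁻¹ * csG β τ v v' b :=
        mul_le_mul_of_nonneg_left hβI (inv_nonneg.2 hβ.le)
      have h6 : β⁻¹ * (β * I) = I := by field_simp
      linarith
    calc ∫ s in a..b, (∫ r in (s - τ)..b, Mt r) = ∫ u in (a - τ)..(b - τ), H u := e_sub
      _ ≤ Real.exp (2*τ) * ∫ u in (a - τ)..(b - τ), K u := step1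
      _ ≤ Real.exp (2*τ) * ∫ u in (max 0 (b - 2*τ))..b, K u :=
          mul_le_mul_of_nonneg_left step2 (Real.exp_nonneg _)
      _ = Real.exp (2*τ) * I := by rw [step3]
      _ ≤ Real.exp (2*τ) * (β⁻¹ * csG β τ v v' b) :=
          mul_le_mul_of_nonneg_left hIle (Real.exp_nonneg _)
      _ = β⁻¹ * Real.exp (2*τ) * csG β τ v v' b := by ring
  calc ‖v j a - v i b‖ ≤ csDiam v a + ∫ s in a..b, ‖w i s‖ := hA
    _ ≤ csDiam v a + ((∫ s in a..b, csDiam v (s - τ))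
        + ∫ s in a..b, (∫ r in (s - τ)..b, Mt r)) := by linarith
    _ ≤ csDiam v a + ((∫ s in a..b, csDiam v (s - τ))
        + β⁻¹ * Real.exp (2*τ) * csG β τ v v' b) := by linarith
    _ = _ := by ring
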